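/- Let F_q be a finite field and let C ⊆ Mat_{s×r}(F_q) be a code with at least two elements whose minimum NRT distance is at least d. Then |C| ≤ q^{rs − d + 1} (the Singleton bound for the NRT metric). -/

import Mathlib

open Polynomial

/-- The NRT weight of a column vector of height `s`: it is `0` for the zero column, and
`s - i + 1` (1-based) when the topmost nonzero entry is in row `i`; with 0-based indexing this
is the maximum of `s - i` over indices `i` with a nonzero entry. -/
def nrtColWt {F : Type*} [Zero F] [DecidableEq F] {s : ℕ} (col : Fin s → F) : ℕ :=
  (Finset.univ.filter fun i => col i ≠ 0).sup fun i => s - i.val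

/-- The NRT weight of an `s × r` matrix: the sum of the NRT weights of its columns. -/
def nrtWt {F : Type*} [Zero F] [DecidableEq F] {s r : ℕ}
    (A : Matrix (Fin s) (Fin r) F) : ℕ :=
  ∑ j, nrtColWt fun i => A i j

private lemma aux_idx {s : ℕ} (hs : 0 < s) {a b x y : ℕ} (hx : x < s) (hy : y < s)
    (h : a * s + x = b * s + y) : a = b ∧ x = y := by
  have hda : (a * s + x) / s = a := by
    rw [mul_comm, Nat.mul_add_div hs, Nat.div_eq_of_lt hx]; omega
  have hdb : (b * s + y) / s = b := by
    rw [mul_comm, Nat.mul_add_div hs, Nat.div_eq_of_lt hy]; omega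
  have hab : a = b := by rw [← hda, ← hdb, h]
  refine ⟨hab, ?_⟩
  subst hab
  exact Nat.add_left_cancel h

/-- **Singleton bound for the NRT metric.** If a code
`C ⊆ Mat_{s×r}(F_q)` has at least two elements and minimum NRT distance at least `d`, then
`|C| ≤ q^(r*s - d + 1)`. -/
theorem nrt_singleton_bound {F : Type*} [Field F] [Fintype F] [DecidableEq F] {s r : ℕ}
    (C : Finset (Matrix (Fin s) (Fin r) F)) (hC : 2 ≤ C.card)
    (d : ℕ) (hd : ∀ A ∈ C, ∀ B ∈ C, A ≠ B → d ≤ nrtWt (A - B)) :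
    C.card ≤ Fintype.card F ^ (r * s - d + 1) := by
  classical
  have hq : 1 ≤ Fintype.card F := Fintype.card_pos
  have hcol_le : ∀ (col : Fin s → F), nrtColWt col ≤ s := fun col =>
    Finset.sup_le fun i _ => Nat.sub_le s i.val
  have hwt_le : ∀ M : Matrix (Fin s) (Fin r) F, nrtWt M ≤ r * s := by
    intro M
    calc nrtWt M ≤ ∑ _j : Fin r, s := Finset.sum_le_sum fun j _ => hcol_le _
      _ = r * s := by simp
  obtain ⟨A0, hA0, B0, hB0, hne⟩ := Finset.one_lt_card.mp hC
  have hdrs : d ≤ r * s := le_trans (hd A0 hA0 B0 hB0 hne) (hwt_le _)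
  have hcardM : Fintype.card (Matrix (Fin s) (Fin r) F) = Fintype.card F ^ (r * s) := by
    rw [Fintype.card_congr (Matrix.of (m := Fin s) (n := Fin r) (α := F)).symm]
    simp [Fintype.card_fun, ← pow_mul, mul_comm]
  rcases Nat.eq_zero_or_pos d with hd0 | hd1
  · subst hd0
    calc C.card ≤ Fintype.card (Matrix (Fin s) (Fin r) F) := Finset.card_le_univ C
      _ = Fintype.card F ^ (r * s) := hcardM
      _ ≤ Fintype.card F ^ (r * s - 0 + 1) := Nat.pow_le_pow_right hq (by omega)
  -- main case : 1 ≤ d ≤ r * s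
  set e := d - 1 with he
  have hers : e ≤ r * s := by omega
  -- deleted positions
  set D : Finset (Fin r × Fin s) :=
    Finset.univ.filter (fun p => p.1.val * s + (s - 1 - p.2.val) < e) with hD
  -- kept positions
  set K : Finset (Fin r × Fin s) :=
    Finset.univ.filter (fun p => ¬ (p.1.val * s + (s - 1 - p.2.val) < e)) with hK
  -- D has exactly e elements
  have hDcard : D.card = e := by
    rcases Nat.eq_zero_or_pos e with he0 | he1
    · rw [he0]
      simp only [Finset.card_eq_zero, hD, Finset.filter_eq_empty_iff]
      intro p _
      omega
    have hs : 0 < s := by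
      by_contra h
      have : s = 0 := by omega
      subst this
      omega
    apply le_antisymm
    · -- injection D → range e  via the index
      have := Finset.card_le_card_of_injOn
        (f := fun p : Fin r × Fin s => p.1.val * s + (s - 1 - p.2.val))
        (s := D) (t := Finset.range e)
        (by
          intro p hp
          rw [hD, Finset.mem_coe, Finset.mem_filter] at hp
          exact Finset.mem_range.mpr hp.2)
        (by
          intro p hp q hq hpq
          have hx : s - 1 - p.2.val < s := by omega
          have hy : s - 1 - q.2.val < s := by omega
          obtain ⟨h1, h2⟩ := aux_idx hs hx hy hpq
          have hp2 : p.2.val < s := p.2.isLt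
          have hq2 : q.2.val < s := q.2.isLt
          have : p.2.val = q.2.val := by omega
          exact Prod.ext (Fin.ext h1) (Fin.ext this))
      simpa using this
    · -- injection range e → D
      have hr : 0 < r := by
        by_contra h
        have : r = 0 := by omega
        subst this
        simp at hers
        omega
      have := Finset.card_le_card_of_injOn
        (f := fun k : ℕ => ((⟨min (k / s) (r - 1), by
            have := Nat.min_le_right (k / s) (r - 1); omega⟩,
          ⟨s - 1 - k % s, by omega⟩) : Fin r × Fin s))
        (s := Finset.range e) (t := D)
        (by
          intro k hk
          have hk' : k < e := Finset.mem_range.mp hk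
          have hdiv : k / s < r := (Nat.div_lt_iff_lt_mul hs).mpr (lt_of_lt_of_le hk' hers)
          have hmin : min (k / s) (r - 1) = k / s := Nat.min_eq_left (by omega)
          rw [hD, Finset.mem_coe, Finset.mem_filter]
          refine ⟨Finset.mem_univ _, ?_⟩
          simp only [hmin]
          have hmod : k % s < s := Nat.mod_lt _ hs
          have h1 : s - 1 - (s - 1 - k % s) = k % s := by omega
          simp only [h1]
          have h2 : k / s * s + k % s = k := by
            rw [mul_comm]
            exact Nat.div_add_mod k s
          omega)
        (by
          intro k hk k' hk' hkk
          have hk1 : k < e := Finset.mem_range.mp hk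
          have hk2 : k' < e := Finset.mem_range.mp hk'
          have hdiv : k / s < r := (Nat.div_lt_iff_lt_mul hs).mpr (lt_of_lt_of_le hk1 hers)
          have hdiv' : k' / s < r := (Nat.div_lt_iff_lt_mul hs).mpr (lt_of_lt_of_le hk2 hers)
          have hmin : min (k / s) (r - 1) = k / s := Nat.min_eq_left (by omega)
          have hmin' : min (k' / s) (r - 1) = k' / s := Nat.min_eq_left (by omega)
          have h1 : min (k / s) (r - 1) = min (k' / s) (r - 1) :=
            congrArg Fin.val (congrArg Prod.fst hkk)
          have h2 : s - 1 - k % s = s - 1 - k' % s :=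
            congrArg Fin.val (congrArg Prod.snd hkk)
          have hmodlt : k % s < s := Nat.mod_lt _ hs
          have hmodlt' : k' % s < s := Nat.mod_lt _ hs
          have hm : k % s = k' % s := by omega
          have hdeq : k / s = k' / s := by rw [← hmin, ← hmin', h1]
          have e1 := Nat.div_add_mod k s
          have e2 := Nat.div_add_mod k' s
          have : s * (k / s) = s * (k' / s) := by rw [hdeq]
          omega)
      simpa using this
  -- kept positions count
  have hKcard : K.card = r * s - e := by
    have hsplit : D.card + K.card = r * s := by
      rw [hD, hK]
      rw [Finset.card_filter_add_card_filter_not]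
      simp [mul_comm]
    omega
  -- fiberwise decomposition of D.card
  have hfib : ∑ j : Fin r, (Finset.univ.filter
      (fun i : Fin s => j.val * s + (s - 1 - i.val) < e)).card = D.card := by
    rw [hD, Finset.card_eq_sum_card_fiberwise
      (f := Prod.fst) (t := Finset.univ) (fun p _ => Finset.mem_univ _)]
    refine Finset.sum_congr rfl fun j _ => ?_
    apply Finset.card_bij (fun i _ => ((j, i) : Fin r × Fin s))
    · intro i hi
      simp only [Finset.mem_filter, Finset.mem_univ, true_and] at hi ⊢
      exact ⟨hi, trivial⟩
    · intro i hi i' hi' h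
      exact congrArg Prod.snd h
    · intro p hp
      simp only [Finset.mem_filter, Finset.mem_univ, true_and] at hp
      refine ⟨p.2, ?_, ?_⟩
      · simp only [Finset.mem_filter, Finset.mem_univ, true_and]
        rw [← hp.2]
        exact hp.1
      · exact (Prod.ext hp.2.symm rfl)
  -- the key weight bound for matrices supported on D
  have hbound : ∀ M : Matrix (Fin s) (Fin r) F,
      (∀ j : Fin r, ∀ i : Fin s, ¬ (j.val * s + (s - 1 - i.val) < e) → M i j = 0) →
      nrtWt M ≤ e := by
    intro M hM
    have hcol : ∀ j : Fin r, nrtColWt (fun i => M i j) ≤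
        (Finset.univ.filter (fun i : Fin s => j.val * s + (s - 1 - i.val) < e)).card := by
      intro j
      apply Finset.sup_le
      intro i hi
      rw [Finset.mem_filter] at hi
      have hiD : j.val * s + (s - 1 - i.val) < e := by
        by_contra h
        exact hi.2 (hM j i h)
      calc s - i.val = (Finset.Ici i).card := (Fin.card_Ici i).symm
        _ ≤ _ := by
            apply Finset.card_le_card
            intro i' hi'
            rw [Finset.mem_Ici] at hi'
            rw [Finset.mem_filter]
            refine ⟨Finset.mem_univ _, ?_⟩
            have : s - 1 - i'.val ≤ s - 1 - i.val := by
              have : i.val ≤ i'.val := hi'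
              omega
            calc j.val * s + (s - 1 - i'.val) ≤ j.val * s + (s - 1 - i.val) :=
                  Nat.add_le_add_left this _
              _ < e := hiD
    calc nrtWt M ≤ ∑ j : Fin r, (Finset.univ.filter
          (fun i : Fin s => j.val * s + (s - 1 - i.val) < e)).card :=
        Finset.sum_le_sum fun j _ => hcol j
      _ = D.card := hfib
      _ = e := hDcard
  -- projection onto kept positions is injective on C
  have hinj : Set.InjOn (fun (M : Matrix (Fin s) (Fin r) F) (p : ↥K) => M p.1.2 p.1.1)
      ↑C := by
    intro A hA B hB hAB
    by_contra hne2
    have hdle : d ≤ nrtWt (A - B) := hd A hA B hB hne2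
    have hle : nrtWt (A - B) ≤ e := by
      apply hbound
      intro j i h
      have hmem : (j, i) ∈ K := by
        rw [hK, Finset.mem_filter]
        exact ⟨Finset.mem_univ _, h⟩
      have := congrFun hAB ⟨(j, i), hmem⟩
      simp only at this
      simp [Matrix.sub_apply, this]
    omega
  have hcount := Finset.card_le_card_of_injOn
    (f := fun (M : Matrix (Fin s) (Fin r) F) (p : ↥K) => M p.1.2 p.1.1)
    (s := C) (t := (Finset.univ : Finset (↥K → F)))
    (fun _ _ => Finset.mem_univ _) hinj
  calc C.card ≤ (Finset.univ : Finset (↥K → F)).card := hcount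
    _ = Fintype.card F ^ K.card := by
        rw [Finset.card_univ, Fintype.card_fun, Fintype.card_coe]
    _ = Fintype.card F ^ (r * s - d + 1) := by
        rw [hKcard]
        congr 1
        omega
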